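/- When tasks may additionally underreport their values, M_BFS and M_DFS remain truthful: if a task t_j is unmatched in the maximum-weight b-matching computed when it reports its true value q_j, then it is also unmatched when it reports any value q'_j with 0 < q'_j < q_j (edges fixed). Consequently, with tasks bounded by their statements in both edges and values, reporting truthfully is a dominant strategy under M_BFS and M_DFS. -/

import Mathlib

open Classical

/-- An edge of the bipartite graph: a pair (agent, task). -/
abbrev Edge (n m : ℕ) := Fin n × Fin m

variable {n m : ℕ}

/-- Number of tasks assigned to agent `i` in the edge set `μ`. -/
def deg (μ : Finset (Edge n m)) (i : Fin n) : ℕ := (μ.filter (fun e => e.1 = i)).card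

/-- `μ` is a b-matching over the edge set `E'`: it uses only edges of `E'`, each agent `i`
receives at most `b i` tasks, and each task is matched to at most one agent. -/
def IsBMatching (b : Fin n → ℕ) (E' μ : Finset (Edge n m)) : Prop :=
  μ ⊆ E' ∧ (∀ i, deg μ i ≤ b i) ∧ ∀ j : Fin m, (μ.filter (fun e => e.2 = j)).card ≤ 1

/-- Weight of a matching: total value of matched tasks. -/
noncomputable def weight (q : Fin m → ℝ) (μ : Finset (Edge n m)) : ℝ := ∑ e ∈ μ, q e.2

/-- Utility of agent `i`: total value of the tasks matched to `i`. -/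
noncomputable def util (q : Fin m → ℝ) (i : Fin n) (μ : Finset (Edge n m)) : ℝ :=
  ∑ e ∈ μ.filter (fun e => e.1 = i), q e.2

/-- `μ` is a maximum vertex-weighted b-matching over the edge set `E'`. -/
def IsMaxMatching (b : Fin n → ℕ) (q : Fin m → ℝ) (E' μ : Finset (Edge n m)) : Prop :=
  IsBMatching b E' μ ∧ ∀ ν, IsBMatching b E' ν → weight q ν ≤ weight q μ

/-- The edges of `E` incident to agent `i`. -/
def agentEdges (E : Finset (Edge n m)) (i : Fin n) : Finset (Edge n m) :=
  E.filter (fun e => e.1 = i)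

/-- The edge set obtained from `E` when agent `i` reports `S` instead of its true edges. -/
def deviate (E : Finset (Edge n m)) (i : Fin n) (S : Finset (Edge n m)) : Finset (Edge n m) :=
  E.filter (fun e => e.1 ≠ i) ∪ S

/-- A valid report of agent `i`: a nonempty subset of its true incident edges. -/
def ValidReport (E : Finset (Edge n m)) (i : Fin n) (S : Finset (Edge n m)) : Prop :=
  S ⊆ agentEdges E i ∧ S.Nonempty
open Classical in
/-- The tasks sorted in non-increasing order of value (ties broken by index). -/
noncomputable def sortedTasks (m : ℕ) (q : Fin m → ℝ) : List (Fin m) :=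
  List.insertionSort (fun j k => q k ≤ q j) (List.finRange m)

/-- The greedy mechanism `M_AP`: process tasks in non-increasing value order, assigning each
task to the highest-priority unsaturated agent connected to it, if any. -/
noncomputable def MAP (b : Fin n → ℕ) (q : Fin m → ℝ) (E' : Finset (Edge n m)) :
    Finset (Edge n m) :=
  (sortedTasks m q).foldl (fun μ j =>
    match (List.finRange n).find? (fun i => decide ((i, j) ∈ E' ∧ deg μ i < b i)) with
    | some i => insert (i, j) μ
    | none => μ) ∅

/-- `p = [(i₁,j₁),…,(i_L,j_L)]` is an augmenting path from task `j = j₁` with respect to the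
matching `μ` in the graph `E'`: the edges `(i_ℓ, j_ℓ)` are non-matching edges of `E'`, the
edges `(i_ℓ, j_{ℓ+1})` are matching edges, all interior agents are saturated and the final
agent is unsaturated. -/
structure IsAugPathFrom (b : Fin n → ℕ) (E' μ : Finset (Edge n m)) (j : Fin m)
    (p : List (Edge n m)) : Prop where
  ne : p ≠ []
  starts : ∀ e ∈ p.head?, e.2 = j
  mem : ∀ e ∈ p, e ∈ E' ∧ e ∉ μ
  matched : ∀ k, (h : k + 1 < p.length) →
    ((p.get ⟨k, Nat.lt_of_succ_lt h⟩).1, (p.get ⟨k + 1, h⟩).2) ∈ μ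
  satInterior : ∀ k, (h : k + 1 < p.length) →
    b (p.get ⟨k, Nat.lt_of_succ_lt h⟩).1 ≤ deg μ (p.get ⟨k, Nat.lt_of_succ_lt h⟩).1
  unsatLast : ∀ e ∈ p.getLast?, deg μ e.1 < b e.1
  agentsNodup : (p.map Prod.fst).Nodup
  tasksNodup : (p.map Prod.snd).Nodup

/-- The matching edges of an augmenting path. -/
def pathMatched (p : List (Edge n m)) : List (Edge n m) :=
  (p.zip p.tail).map (fun ef => (ef.1.1, ef.2.2))

/-- Flip an augmenting path: remove its matching edges and add its non-matching edges. -/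
def applyPath (μ : Finset (Edge n m)) (p : List (Edge n m)) : Finset (Edge n m) :=
  (μ \ (pathMatched p).toFinset) ∪ p.toFinset

/-- A numeric key realizing the lexicographic order (by vertex indices) on augmenting paths. -/
def pathKey (n m : ℕ) (p : List (Edge n m)) : ℕ :=
  ((p.flatMap fun (e : Edge n m) => [e.1.val + 1, e.2.val + 1]) ++
    List.replicate (2 * n - 2 * p.length) 0).foldl (fun a d => a * (n + m + 2) + d) 0

/-- DFS explores agents in priority order and goes deep first: it returns the lexicographically
least augmenting path. -/
def dfsCost (n m : ℕ) (p : List (Edge n m)) : ℕ := pathKey n m p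

/-- BFS returns a shortest augmenting path, exploring vertices in priority order: it returns
the lexicographically least augmenting path among those of minimum length. -/
def bfsCost (n m : ℕ) (p : List (Edge n m)) : ℕ :=
  p.length * (n + m + 2) ^ (2 * n + 2) + pathKey n m p

/-- Select the cost-minimal augmenting path from task `j`, if an augmenting path exists. -/
noncomputable def selectPath (cost : List (Edge n m) → ℕ) (b : Fin n → ℕ)
    (E' μ : Finset (Edge n m)) (j : Fin m) : Option (List (Edge n m)) :=
  if h : ∃ p, IsAugPathFrom b E' μ j p ∧ ∀ p', IsAugPathFrom b E' μ j p' → cost p ≤ cost p'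
  then some h.choose else none

/-- The augmenting-path algorithm: process tasks in non-increasing value order, at each step
flipping the augmenting path found by the (deterministic) search given by `cost`. -/
noncomputable def runAug (cost : List (Edge n m) → ℕ) (b : Fin n → ℕ) (q : Fin m → ℝ)
    (E' : Finset (Edge n m)) : Finset (Edge n m) :=
  (sortedTasks m q).foldl (fun μ j =>
    match selectPath cost b E' μ j with
    | some p => applyPath μ p
    | none => μ) ∅

/-- The maximum vertex-weighted b-matching mechanism using breadth-first search. -/
noncomputable def MBFS (b : Fin n → ℕ) (q : Fin m → ℝ) (E' : Finset (Edge n m)) :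
    Finset (Edge n m) := runAug (bfsCost n m) b q E'

/-- The maximum vertex-weighted b-matching mechanism using depth-first search. -/
noncomputable def MDFS (b : Fin n → ℕ) (q : Fin m → ℝ) (E' : Finset (Edge n m)) :
    Finset (Edge n m) := runAug (dfsCost n m) b q E'
/-- The edges of `E` incident to task `j`. -/
def taskEdges (E : Finset (Edge n m)) (j : Fin m) : Finset (Edge n m) :=
  E.filter (fun e => e.2 = j)

/-- The edge set obtained from `E` when task `j` reports `S` instead of its true edges. -/
def tdeviate (E : Finset (Edge n m)) (j : Fin m) (S : Finset (Edge n m)) :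
    Finset (Edge n m) :=
  E.filter (fun e => e.2 ≠ j) ∪ S

/-- Task `j` is matched by `μ`. -/
def taskMatched (μ : Finset (Edge n m)) (j : Fin m) : Prop := ∃ e ∈ μ, e.2 = j

section Aux

open Finset

variable {n m : ℕ} {b : Fin n → ℕ} {E' : Finset (Edge n m)} {q : Fin m → ℝ}

lemma bm_task_unique {μ : Finset (Edge n m)} (h : IsBMatching b E' μ)
    {e f : Edge n m} (he : e ∈ μ) (hf : f ∈ μ) (hef : e.2 = f.2) : e = f := by
  have hc := h.2.2 e.2
  have he' : e ∈ μ.filter (fun x => x.2 = e.2) := by simp [he]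
  have hf' : f ∈ μ.filter (fun x => x.2 = e.2) := by
    simp only [Finset.mem_filter]; exact ⟨hf, hef.symm⟩
  exact Finset.card_le_one.mp hc e he' f hf'

lemma deg_mono {μ ν : Finset (Edge n m)} (h : μ ⊆ ν) (i : Fin n) : deg μ i ≤ deg ν i :=
  Finset.card_le_card (Finset.filter_subset_filter _ h)

lemma bm_subset {μ ν : Finset (Edge n m)} (h : IsBMatching b E' ν) (hsub : μ ⊆ ν) :
    IsBMatching b E' μ :=
  ⟨hsub.trans h.1, fun i => (deg_mono hsub i).trans (h.2.1 i),
   fun j => le_trans (Finset.card_le_card (Finset.filter_subset_filter _ hsub)) (h.2.2 j)⟩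

lemma bm_empty : IsBMatching b E' (∅ : Finset (Edge n m)) :=
  ⟨Finset.empty_subset _, fun i => by simp [deg], fun j => by simp⟩

lemma deg_insert_erase {μ : Finset (Edge n m)} {f g : Edge n m}
    (hf : f ∈ μ) (hg : g ∉ μ) (ha : f.1 = g.1) (i : Fin n) :
    deg (insert g (μ.erase f)) i = deg μ i := by
  classical
  unfold deg
  rw [Finset.filter_insert, Finset.filter_erase]
  by_cases hgi : g.1 = i
  · rw [if_pos hgi]
    have hfmem : f ∈ μ.filter (fun e => e.1 = i) := by
      simp only [Finset.mem_filter]; exact ⟨hf, by rw [ha, hgi]⟩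
    have hgmem : g ∉ (μ.filter (fun e => e.1 = i)).erase f := by
      intro hcon
      exact hg (Finset.mem_of_mem_filter _ (Finset.mem_of_mem_erase hcon))
    rw [Finset.card_insert_of_notMem hgmem, Finset.card_erase_of_mem hfmem]
    have : 0 < (μ.filter (fun e => e.1 = i)).card := Finset.card_pos.mpr ⟨f, hfmem⟩
    omega
  · rw [if_neg hgi]
    have : f ∉ μ.filter (fun e => e.1 = i) := by
      simp only [Finset.mem_filter, not_and]
      intro _; rw [ha]; exact hgi
    rw [Finset.erase_eq_of_notMem this]

lemma weight_insert {μ : Finset (Edge n m)} {g : Edge n m} (hg : g ∉ μ) :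
    weight q (insert g μ) = weight q μ + q g.2 := by
  unfold weight; rw [Finset.sum_insert hg]; ring

lemma weight_erase {μ : Finset (Edge n m)} {f : Edge n m} (hf : f ∈ μ) :
    weight q (μ.erase f) = weight q μ - q f.2 := by
  unfold weight; rw [Finset.sum_erase_eq_sub hf]

lemma swap_lemma {μ : Finset (Edge n m)} {f g : Edge n m}
    (hBM : IsBMatching b E' μ) (hf : f ∈ μ) (hgE : g ∈ E')
    (hgM : ¬ taskMatched μ g.2) (ha : f.1 = g.1) :
    IsBMatching b E' (insert g (μ.erase f)) ∧
    (∀ q : Fin m → ℝ, weight q (insert g (μ.erase f)) = weight q μ - q f.2 + q g.2) ∧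
    (∀ l, taskMatched (insert g (μ.erase f)) l ↔ ((taskMatched μ l ∧ l ≠ f.2) ∨ l = g.2)) ∧
    (∀ e ∈ μ, e ≠ f → e ∈ insert g (μ.erase f)) := by
  classical
  have hg : g ∉ μ := fun h => hgM ⟨g, h, rfl⟩
  have huniq : ∀ e ∈ insert g (μ.erase f), ∀ e' ∈ insert g (μ.erase f),
      e.2 = e'.2 → e = e' := by
    intro e he e' he' hee
    rcases Finset.mem_insert.mp he with he | he
    · rcases Finset.mem_insert.mp he' with he' | he'
      · rw [he, he']
      · exact absurd ⟨e', Finset.mem_of_mem_erase he', by rw [← hee, he]⟩ hgM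
    · rcases Finset.mem_insert.mp he' with he' | he'
      · exact absurd ⟨e, Finset.mem_of_mem_erase he, by rw [hee, he']⟩ hgM
      · exact bm_task_unique hBM (Finset.mem_of_mem_erase he)
          (Finset.mem_of_mem_erase he') hee
  refine ⟨⟨?_, ?_, ?_⟩, ?_, ?_, ?_⟩
  · exact Finset.insert_subset hgE ((Finset.erase_subset _ _).trans hBM.1)
  · intro i; rw [deg_insert_erase hf hg ha]; exact hBM.2.1 i
  · intro jj
    apply Finset.card_le_one.mpr
    intro a hax c hcx
    have ha' := Finset.mem_filter.mp hax
    have hc' := Finset.mem_filter.mp hcx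
    exact huniq a ha'.1 c hc'.1 (ha'.2.trans hc'.2.symm)
  · intro q
    have hgne : g ∉ μ.erase f := fun h => hg (Finset.mem_of_mem_erase h)
    rw [weight_insert hgne, weight_erase hf]
  · intro l
    constructor
    · rintro ⟨e, he, rfl⟩
      rcases Finset.mem_insert.mp he with rfl | he
      · exact Or.inr rfl
      · refine Or.inl ⟨⟨e, Finset.mem_of_mem_erase he, rfl⟩, ?_⟩
        intro hl
        exact (Finset.ne_of_mem_erase he) (bm_task_unique hBM (Finset.mem_of_mem_erase he) hf hl)
    · rintro (⟨⟨e, he, rfl⟩, hne⟩ | rfl)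
      · exact ⟨e, Finset.mem_insert_of_mem (Finset.mem_erase.mpr ⟨fun h => hne (by rw [h]), he⟩), rfl⟩
      · exact ⟨g, Finset.mem_insert_self _ _, rfl⟩
  · intro e he hef
    exact Finset.mem_insert_of_mem (Finset.mem_erase.mpr ⟨hef, he⟩)

end Aux
section Aux2

variable {n m : ℕ} {b : Fin n → ℕ} {E' : Finset (Edge n m)} {q : Fin m → ℝ}

/-- Inductive characterization of (not-necessarily-simple) augmenting paths. -/
inductive AugP (b : Fin n → ℕ) (E' μ : Finset (Edge n m)) : Fin m → List (Edge n m) → Prop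
  | single (i : Fin n) (j : Fin m) : (i,j) ∈ E' → (i,j) ∉ μ → deg μ i < b i →
      AugP b E' μ j [(i,j)]
  | cons (i : Fin n) (j j₂ : Fin m) (p : List (Edge n m)) : (i,j) ∈ E' → (i,j) ∉ μ →
      b i ≤ deg μ i → (i,j₂) ∈ μ → AugP b E' μ j₂ p → AugP b E' μ j ((i,j) :: p)

lemma AugP.ne_nil {μ : Finset (Edge n m)} {j : Fin m} {p : List (Edge n m)}
    (h : AugP b E' μ j p) : p ≠ [] := by
  cases h <;> simp

lemma AugP.head_task {μ : Finset (Edge n m)} {j : Fin m} {p : List (Edge n m)}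
    (h : AugP b E' μ j p) : ∀ e ∈ p.head?, e.2 = j := by
  cases h <;> simp

/-- Drop the head of an augmenting path. -/
lemma augpath_tail {μ : Finset (Edge n m)} {j : Fin m} {e : Edge n m} {p : List (Edge n m)}
    (h : IsAugPathFrom b E' μ j (e :: p)) {hd : Edge n m} (hhd : p.head? = some hd) :
    IsAugPathFrom b E' μ hd.2 p := by
  have hpne : p ≠ [] := by intro hcon; rw [hcon] at hhd; simp at hhd
  constructor
  · exact hpne
  · intro e' he'
    rw [hhd] at he'
    simp only [Option.mem_def, Option.some.injEq] at he'
    rw [he']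
  · intro e' he'; exact h.mem e' (List.mem_cons_of_mem _ he')
  · intro k hk
    have hk' : (k+1) + 1 < (e :: p).length := by simp; omega
    have := h.matched (k+1) hk'
    simpa using this
  · intro k hk
    have hk' : (k+1) + 1 < (e :: p).length := by simp; omega
    have := h.satInterior (k+1) hk'
    simpa using this
  · intro e' he'
    apply h.unsatLast
    obtain ⟨a, l, rfl⟩ := List.exists_cons_of_ne_nil hpne
    simpa using he'
  · exact (List.nodup_cons.mp (by simpa using h.agentsNodup)).2
  · exact (List.nodup_cons.mp (by simpa using h.tasksNodup)).2

lemma augpath_to_augP {μ : Finset (Edge n m)} :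
    ∀ {p : List (Edge n m)} {j : Fin m}, IsAugPathFrom b E' μ j p → AugP b E' μ j p := by
  intro p
  induction p with
  | nil => intro j h; exact absurd rfl h.ne
  | cons e rest ih =>
    intro j h
    have hstart : e.2 = j := h.starts e (by simp)
    have hmem := h.mem e (by simp)
    cases hrest : rest with
    | nil =>
      have hunsat : deg μ e.1 < b e.1 := by
        apply h.unsatLast
        rw [hrest]; simp
      have : e = (e.1, j) := Prod.ext rfl hstart
      rw [this]
      exact AugP.single e.1 j (this ▸ hmem.1) (this ▸ hmem.2) hunsat
    | cons hd tl =>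
      subst hrest
      have hlen : 0 + 1 < (e :: hd :: tl).length := by simp
      have hmatch := h.matched 0 hlen
      have hsat := h.satInterior 0 hlen
      simp only [List.get] at hmatch hsat
      have htail : IsAugPathFrom b E' μ hd.2 (hd :: tl) := augpath_tail h (by simp)
      have hrec := ih htail
      have he : e = (e.1, j) := Prod.ext rfl hstart
      rw [he]
      exact AugP.cons e.1 j hd.2 (hd :: tl) (he ▸ hmem.1) (he ▸ hmem.2) hsat hmatch hrec

lemma augP_to_augpath {μ : Finset (Edge n m)} :
    ∀ {p : List (Edge n m)} {j : Fin m}, AugP b E' μ j p →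
      (p.map Prod.fst).Nodup → (p.map Prod.snd).Nodup → IsAugPathFrom b E' μ j p := by
  intro p j h
  induction h with
  | single i j hE hμ hdeg =>
    intro _ _
    constructor
    · simp
    · intro e he; simp only [List.head?_cons, Option.mem_def, Option.some.injEq] at he; rw [← he]
    · intro e he; simp only [List.mem_singleton] at he; rw [he]; exact ⟨hE, hμ⟩
    · intro k hk; simp at hk
    · intro k hk; simp at hk
    · intro e he; simp only [List.getLast?_singleton, Option.mem_def, Option.some.injEq] at he
      rw [← he]; exact hdeg
    · simp
    · simp
  | cons i j j₂ p hE hμ hsat hmat hrec ih =>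
    intro hA hT
    have hArest : (p.map Prod.fst).Nodup := (List.nodup_cons.mp (by simpa using hA)).2
    have hTrest : (p.map Prod.snd).Nodup := (List.nodup_cons.mp (by simpa using hT)).2
    have hsub : IsAugPathFrom b E' μ j₂ p := ih hArest hTrest
    have hpne : p ≠ [] := hsub.ne
    obtain ⟨hd, tl, rfl⟩ := List.exists_cons_of_ne_nil hpne
    have hhd2 : hd.2 = j₂ := hsub.starts hd (by simp)
    constructor
    · simp
    · intro e he; simp only [List.head?_cons, Option.mem_def, Option.some.injEq] at he; rw [← he]
    · intro e he
      rcases List.mem_cons.mp he with rfl | he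
      · exact ⟨hE, hμ⟩
      · exact hsub.mem e he
    · intro k hk
      match k with
      | 0 =>
        simp only [List.get]
        rw [hhd2]; exact hmat
      | (k+1) =>
        have hk' : k + 1 < (hd :: tl).length := by simp at hk ⊢; omega
        have := hsub.matched k hk'
        simpa using this
    · intro k hk
      match k with
      | 0 => simpa using hsat
      | (k+1) =>
        have hk' : k + 1 < (hd :: tl).length := by simp at hk ⊢; omega
        have := hsub.satInterior k hk'
        simpa using this
    · intro e he
      apply hsub.unsatLast
      simpa using he
    · simpa using hA
    · simpa using hT

end Aux2
section Aux3

variable {n m : ℕ} {b : Fin n → ℕ} {E' : Finset (Edge n m)} {q : Fin m → ℝ}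

lemma single_path {μ : Finset (Edge n m)} {i : Fin n} {j : Fin m}
    (hE : (i,j) ∈ E') (hμ : (i,j) ∉ μ) (hdeg : deg μ i < b i) :
    IsAugPathFrom b E' μ j [(i,j)] :=
  augP_to_augpath (AugP.single i j hE hμ hdeg) (by simp) (by simp)

/-- Transfer an augmenting path from a swapped matching back to the original. -/
lemma augP_transfer {μ : Finset (Edge n m)} {f g : Edge n m}
    (hf : f ∈ μ) (hg : g ∉ μ) (ha : f.1 = g.1) :
    ∀ {p : List (Edge n m)} {t : Fin m}, AugP b E' (insert g (μ.erase f)) t p →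
    (∀ e ∈ p, e ≠ f) → (∀ e ∈ p.tail, e.2 ≠ g.2) → AugP b E' μ t p := by
  intro p t h
  induction h with
  | single i j hE hμ hdeg =>
    intro hA hB
    refine AugP.single i j hE ?_ ?_
    · intro hcon
      exact hμ (Finset.mem_insert_of_mem (Finset.mem_erase.mpr ⟨hA _ (by simp), hcon⟩))
    · rwa [deg_insert_erase hf hg ha] at hdeg
  | cons i j j₂ p hE hμ hsat hmat hrec ih =>
    intro hA hB
    have hpne := hrec.ne_nil
    obtain ⟨hd, tl, rfl⟩ := List.exists_cons_of_ne_nil hpne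
    have hhd2 : hd.2 = j₂ := hrec.head_task hd (by simp)
    have hmat' : (i, j₂) ∈ μ := by
      rcases Finset.mem_insert.mp hmat with heq | hmem
      · exact absurd (hhd2.trans (congrArg Prod.snd heq)) (hB hd (by simp))
      · exact Finset.mem_of_mem_erase hmem
    refine AugP.cons i j j₂ _ hE ?_ ?_ hmat' ?_
    · intro hcon
      exact hμ (Finset.mem_insert_of_mem (Finset.mem_erase.mpr ⟨hA _ (by simp), hcon⟩))
    · rwa [deg_insert_erase hf hg ha] at hsat
    · exact ih (fun e he => hA e (List.mem_cons_of_mem _ he))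
        (fun e he => hB e (List.mem_cons_of_mem _ he))

lemma augP_suffix_task {μ' : Finset (Edge n m)} :
    ∀ {p : List (Edge n m)} {t : Fin m}, AugP b E' μ' t p → ∀ {j : Fin m},
      j ∈ p.map Prod.snd →
      ∃ p', p'.IsSuffix p ∧ AugP b E' μ' j p' ∧ (∀ hd ∈ p'.head?, hd.2 = j) := by
  intro p t h
  induction h with
  | single i j₀ hE hμ hdeg =>
    intro j hj
    simp only [List.map_cons, List.map_nil, List.mem_singleton] at hj
    subst hj
    exact ⟨[(i,j)], List.suffix_rfl, AugP.single i j hE hμ hdeg, by simp⟩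
  | cons i j₀ j₂ p hE hμ hsat hmat hrec ih =>
    intro j hj
    simp only [List.map_cons, List.mem_cons] at hj
    rcases hj with rfl | hj
    · exact ⟨(i,j) :: p, List.suffix_rfl, AugP.cons i j j₂ p hE hμ hsat hmat hrec, by simp⟩
    · obtain ⟨p', hsuf, hP, hhd⟩ := ih hj
      exact ⟨p', hsuf.trans (List.suffix_cons _ _), hP, hhd⟩

lemma augP_suffix_agent {μ' : Finset (Edge n m)} :
    ∀ {p : List (Edge n m)} {t : Fin m}, AugP b E' μ' t p → ∀ {e₀ : Edge n m}, e₀ ∈ p →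
      deg μ' e₀.1 < b e₀.1 ∨
      ∃ j₂' p', (e₀ :: p').IsSuffix p ∧ (e₀.1, j₂') ∈ μ' ∧ AugP b E' μ' j₂' p' ∧
        (∀ hd ∈ p'.head?, hd.2 = j₂') := by
  intro p t h
  induction h with
  | single i j₀ hE hμ hdeg =>
    intro e₀ he₀
    simp only [List.mem_singleton] at he₀
    subst he₀
    exact Or.inl hdeg
  | cons i j₀ j₂ p hE hμ hsat hmat hrec ih =>
    intro e₀ he₀
    rcases List.mem_cons.mp he₀ with rfl | he₀
    · exact Or.inr ⟨j₂, p, List.suffix_rfl, hmat, hrec, hrec.head_task⟩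
    · rcases ih he₀ with h1 | ⟨j₂', p', hsuf, hm, hP, hhd⟩
      · exact Or.inl h1
      · exact Or.inr ⟨j₂', p', hsuf.trans (List.suffix_cons _ _), hm, hP, hhd⟩

lemma suffix_of_tail {α : Type*} {p' p : List α} (h : p'.IsSuffix p) (hne : p' ≠ p) :
    p'.IsSuffix p.tail := by
  obtain ⟨l, rfl⟩ := h
  cases l with
  | nil => simp at hne
  | cons a l => exact ⟨l, by simp⟩

/-- The key pruning lemma: if no augmenting path from `j` exists in `μ`, none exists from
`j₂` in the swapped matching. -/
lemma prune {μ : Finset (Edge n m)} {i₁ : Fin n} {j j₂ : Fin m}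
    (hgE : (i₁,j) ∈ E') (hjun : ¬ taskMatched μ j)
    (hfμ : (i₁,j₂) ∈ μ) (hsat : b i₁ ≤ deg μ i₁)
    (hno : ¬ ∃ p, IsAugPathFrom b E' μ j p) :
    ¬ ∃ p, IsAugPathFrom b E' (insert (i₁,j) (μ.erase (i₁,j₂))) j₂ p := by
  classical
  rintro ⟨p₂, hp₂⟩
  set f : Edge n m := (i₁, j₂) with hfdef
  set g : Edge n m := (i₁, j) with hgdef
  have hg2 : g.2 = j := by rw [hgdef]
  have hf2 : f.2 = j₂ := by rw [hfdef]
  have hf1 : f.1 = i₁ := by rw [hfdef]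
  have hg : g ∉ μ := fun h => hjun ⟨g, h, rfl⟩
  have ha : f.1 = g.1 := rfl
  have hj2j : j₂ ≠ j := fun h => hjun ⟨f, hfμ, h⟩
  have hA := augpath_to_augP hp₂
  have hAN := hp₂.agentsNodup
  have hTN := hp₂.tasksNodup
  apply hno
  by_cases hjin : j ∈ p₂.map Prod.snd
  · -- Case 1 : j occurs as a task on the path; take the suffix from j
    obtain ⟨p', hsuf, hP, hhd⟩ := augP_suffix_task hA hjin
    have hp'ne := hP.ne_nil
    have hne : p' ≠ p₂ := by
      intro hcon
      obtain ⟨hd, tl, rfl⟩ := List.exists_cons_of_ne_nil hp'ne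
      have h1 : hd.2 = j := hhd hd (by simp)
      have h2 : hd.2 = j₂ := hA.head_task hd (by rw [← hcon]; simp)
      exact hj2j (h2 ▸ h1 ▸ rfl)
    have hsuf' : p'.IsSuffix p₂.tail := suffix_of_tail hsuf hne
    have htasks_sub : ∀ e ∈ p', e.2 ∈ (p₂.tail.map Prod.snd) :=
      fun e he => List.mem_map_of_mem (hsuf'.subset he)
    have hj2head : j₂ ∉ p₂.tail.map Prod.snd := by
      obtain ⟨hd₂, tl₂, rfl⟩ := List.exists_cons_of_ne_nil hA.ne_nil
      have hhd₂ : hd₂.2 = j₂ := hA.head_task hd₂ (by simp)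
      have : (List.map Prod.snd (hd₂ :: tl₂)).Nodup := hTN
      simp only [List.map_cons, List.nodup_cons] at this
      simpa [hhd₂] using this.1
    have hAnew : AugP b E' μ j p' := by
      refine augP_transfer hfμ hg ha hP ?_ ?_
      · intro e he hcon
        apply hj2head
        have := htasks_sub e he
        rwa [hcon, hf2] at this
      · intro e he hcon
        -- e is in p'.tail with task j = head task of p'; contradicts nodup of tasks p'
        have hTN' : (p'.map Prod.snd).Nodup := hTN.sublist (hsuf.sublist.map _)
        obtain ⟨hd, tl, rfl⟩ := List.exists_cons_of_ne_nil hp'ne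
        have hhd1 : hd.2 = j := hhd hd (by simp)
        simp only [List.map_cons, List.nodup_cons] at hTN'
        apply hTN'.1
        have he' : e ∈ tl := by simpa using he
        have heq2 : e.2 = hd.2 := by rw [hhd1, hcon, hg2]
        rw [← heq2]
        exact List.mem_map_of_mem he'
    exact ⟨p', augP_to_augpath hAnew (hAN.sublist (hsuf.sublist.map _))
      (hTN.sublist (hsuf.sublist.map _))⟩
  · -- Case 2 : j does not occur as a task
    by_cases hi₁ : i₁ ∈ p₂.map Prod.fst
    · -- agent i₁ occurs on the path
      obtain ⟨e₀, he₀, he₀1⟩ := List.mem_map.mp hi₁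
      rcases augP_suffix_agent hA he₀ with hlt | ⟨j₂', p', hsuf, hm, hP, hhd⟩
      · exfalso
        rw [he₀1, deg_insert_erase hfμ hg ha] at hlt
        omega
      · have hi₁p' : i₁ ∉ p'.map Prod.fst := by
          have hnd : ((e₀ :: p').map Prod.fst).Nodup := hAN.sublist (hsuf.sublist.map _)
          simp only [List.map_cons, List.nodup_cons] at hnd
          rw [← he₀1]; exact hnd.1
        have hj2'ne : j₂' ≠ j := by
          intro hcon
          apply hjin
          obtain ⟨hd, tl, rfl⟩ := List.exists_cons_of_ne_nil hP.ne_nil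
          have : hd.2 = j₂' := hhd hd (by simp)
          have hmem : hd ∈ p₂ := hsuf.subset (by simp)
          rw [← hcon, ← this]
          exact List.mem_map_of_mem hmem
        have hm' : (i₁, j₂') ∈ μ := by
          rw [he₀1] at hm
          rcases Finset.mem_insert.mp hm with heq | hmem
          · exact absurd (congrArg Prod.snd heq) hj2'ne
          · exact Finset.mem_of_mem_erase hmem
        have hAnew : AugP b E' μ j₂' p' := by
          refine augP_transfer hfμ hg ha hP ?_ ?_
          · intro e he hcon
            apply hi₁p'
            have : e.1 = i₁ := by rw [hcon, hf1]
            rw [← this]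
            exact List.mem_map_of_mem he
          · intro e he hcon
            apply hjin
            have : e.2 = j := by rw [hcon, hg2]
            rw [← this]
            exact List.mem_map_of_mem (hsuf.subset (List.mem_cons_of_mem _ (List.mem_of_mem_tail he)))
        have hjp' : j ∉ p'.map Prod.snd := by
          intro hcon
          apply hjin
          obtain ⟨e', he', he'2⟩ := List.mem_map.mp hcon
          exact List.mem_map.mpr ⟨e', hsuf.subset (List.mem_cons_of_mem _ he'), he'2⟩
        refine ⟨(i₁, j) :: p', augP_to_augpath
          (AugP.cons i₁ j j₂' p' hgE hg hsat hm' hAnew) ?_ ?_⟩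
        · simp only [List.map_cons, List.nodup_cons]
          exact ⟨hi₁p', hAN.sublist (((List.sublist_cons_self e₀ p').trans hsuf.sublist).map _)⟩
        · simp only [List.map_cons, List.nodup_cons]
          exact ⟨hjp', hTN.sublist (((List.sublist_cons_self e₀ p').trans hsuf.sublist).map _)⟩
    · -- agent i₁ does not occur: prepend (i₁,j) to the whole path
      have hAnew : AugP b E' μ j₂ p₂ := by
        refine augP_transfer hfμ hg ha hA ?_ ?_
        · intro e he hcon
          apply hi₁
          have : e.1 = i₁ := by rw [hcon, hf1]
          rw [← this]
          exact List.mem_map_of_mem he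
        · intro e he hcon
          apply hjin
          have : e.2 = j := by rw [hcon, hg2]
          rw [← this]
          exact List.mem_map_of_mem (List.mem_of_mem_tail he)
      refine ⟨(i₁, j) :: p₂, augP_to_augpath (AugP.cons i₁ j j₂ p₂ hgE hg hsat hfμ hAnew) ?_ ?_⟩
      · simp only [List.map_cons, List.nodup_cons]; exact ⟨hi₁, hAN⟩
      · simp only [List.map_cons, List.nodup_cons]; exact ⟨hjin, hTN⟩

end Aux3
section Aux4

variable {n m : ℕ} {b : Fin n → ℕ} {E' : Finset (Edge n m)} {q : Fin m → ℝ}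

lemma pathMatched_fst_mem {p : List (Edge n m)} {e : Edge n m}
    (h : e ∈ pathMatched p) : e.1 ∈ p.map Prod.fst := by
  unfold pathMatched at h
  obtain ⟨ac, hac, rfl⟩ := List.mem_map.mp h
  exact List.mem_map.mpr ⟨ac.1, (List.of_mem_zip hac).1, rfl⟩

lemma insert_free_edge {μ : Finset (Edge n m)} {i : Fin n} {j : Fin m}
    (hBM : IsBMatching b E' μ) (hE : (i,j) ∈ E') (hμ : (i,j) ∉ μ)
    (hdeg : deg μ i < b i) (hjun : ¬ taskMatched μ j) :
    IsBMatching b E' (insert (i,j) μ) ∧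
    weight q (insert (i,j) μ) = weight q μ + q j ∧
    (∀ l, taskMatched (insert (i,j) μ) l ↔ taskMatched μ l ∨ l = j) := by
  classical
  refine ⟨⟨Finset.insert_subset hE hBM.1, ?_, ?_⟩, ?_, ?_⟩
  · intro a
    rw [deg, Finset.filter_insert]
    by_cases hia : i = a
    · rw [if_pos hia, Finset.card_insert_of_notMem
        (fun h => hμ (Finset.mem_of_mem_filter _ h))]
      have hlt : deg μ a < b a := hia ▸ hdeg
      unfold deg at hlt; omega
    · rw [if_neg hia]; exact hBM.2.1 a
  · intro jj
    rw [Finset.filter_insert]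
    by_cases hjj : j = jj
    · rw [if_pos hjj, Finset.card_insert_of_notMem
        (fun h => hμ (Finset.mem_of_mem_filter _ h))]
      have hempty : μ.filter (fun e => e.2 = jj) = ∅ := by
        rw [Finset.filter_eq_empty_iff]
        intro e he hj2
        exact hjun ⟨e, he, by rw [hj2, ← hjj]⟩
      rw [hempty]; simp
    · rw [if_neg hjj]; exact hBM.2.2 jj
  · exact weight_insert hμ
  · intro l
    constructor
    · rintro ⟨e, he, rfl⟩
      rcases Finset.mem_insert.mp he with rfl | he
      · exact Or.inr rfl
      · exact Or.inl ⟨e, he, rfl⟩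
    · rintro (⟨e, he, rfl⟩ | hlj)
      · exact ⟨e, Finset.mem_insert_of_mem he, rfl⟩
      · exact ⟨(i,j), Finset.mem_insert_self _ _, hlj.symm⟩

lemma applyPath_singleton {μ : Finset (Edge n m)} {e : Edge n m} :
    applyPath μ [e] = insert e μ := by
  unfold applyPath pathMatched
  simp

lemma applyPath_cons {μ : Finset (Edge n m)} {i : Fin n} {j : Fin m}
    {hd : Edge n m} {tl : List (Edge n m)}
    (hiA : i ∉ ((hd :: tl).map Prod.fst)) (hgμ : (i,j) ∉ μ) (hfμ : (i,hd.2) ∈ μ) :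
    applyPath μ ((i,j) :: hd :: tl) = applyPath (insert (i,j) (μ.erase (i,hd.2))) (hd :: tl) := by
  classical
  have hpm : pathMatched ((i,j) :: hd :: tl) = (i, hd.2) :: pathMatched (hd :: tl) := by
    unfold pathMatched
    simp [List.zip_cons_cons]
  have hijM : (i,j) ∉ pathMatched (hd :: tl) := by
    intro hcon
    exact hiA (pathMatched_fst_mem hcon)
  have hfM : (i,hd.2) ∉ pathMatched (hd :: tl) := by
    intro hcon
    exact hiA (pathMatched_fst_mem hcon)
  unfold applyPath
  rw [hpm]
  ext e
  simp only [Finset.mem_union, Finset.mem_sdiff, List.mem_toFinset, List.mem_cons,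
    Finset.mem_insert, Finset.mem_erase]
  have hkey1 : e ∈ pathMatched (hd :: tl) → ¬ e = (i,j) := fun h hc => hijM (hc ▸ h)
  have hkey2 : e ∈ pathMatched (hd :: tl) → ¬ e = (i,hd.2) := fun h hc => hfM (hc ▸ h)
  tauto

lemma apply_path_spec {μ : Finset (Edge n m)} {p : List (Edge n m)} {j : Fin m} :
    AugP b E' μ j p → (p.map Prod.fst).Nodup → (p.map Prod.snd).Nodup →
    IsBMatching b E' μ → ¬ taskMatched μ j →
    IsBMatching b E' (applyPath μ p) ∧
    weight q (applyPath μ p) = weight q μ + q j ∧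
    (∀ l, taskMatched (applyPath μ p) l ↔ taskMatched μ l ∨ l = j) := by
  induction p generalizing μ j with
  | nil => intro h; exact absurd rfl h.ne_nil
  | cons e tl ih =>
    intro h hA hT hBM hjun
    cases h with
    | single i j hE hμ hdeg =>
      rw [applyPath_singleton]
      exact insert_free_edge hBM hE hμ hdeg hjun
    | cons i j j₂ p hE hμ hsat hmat hrec =>
      obtain ⟨hd, tl', rfl⟩ := List.exists_cons_of_ne_nil hrec.ne_nil
      have hj₂ : j₂ = hd.2 := (hrec.head_task hd (by simp)).symm
      subst hj₂
      rw [List.map_cons, List.nodup_cons] at hA hT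
      have hiA : i ∉ (hd :: tl').map Prod.fst := hA.1
      have hjT : j ∉ (hd :: tl').map Prod.snd := hT.1
      have hj2j : hd.2 ≠ j := fun hc => hjun ⟨(i,hd.2), hmat, hc⟩
      have hsw := swap_lemma (f := (i,hd.2)) (g := (i,j)) hBM hmat hE hjun rfl
      obtain ⟨hBM₁, hw₁, hm₁, hpr₁⟩ := hsw
      have hw₁' : weight q (insert (i,j) (μ.erase (i,hd.2))) = weight q μ - q hd.2 + q j :=
        hw₁ q
      have hm₁' : ∀ l, taskMatched (insert (i,j) (μ.erase (i,hd.2))) l ↔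
          ((taskMatched μ l ∧ l ≠ hd.2) ∨ l = j) := hm₁
      -- transfer the sub-path into the swapped matching
      have htrans : AugP b E' (insert (i,j) (μ.erase (i,hd.2))) hd.2 (hd :: tl') := by
        have hins : insert (i,hd.2) ((insert (i,j) (μ.erase (i,hd.2))).erase (i,j)) = μ := by
          rw [Finset.erase_insert (fun hc => hμ (Finset.mem_of_mem_erase hc)),
            Finset.insert_erase hmat]
        have hrec' : AugP b E' (insert (i,hd.2)
            ((insert (i,j) (μ.erase (i,hd.2))).erase (i,j))) hd.2 (hd :: tl') := by
          rw [hins]; exact hrec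
        refine augP_transfer (f := ((i,j) : Edge n m)) (g := ((i,hd.2) : Edge n m))
          (Finset.mem_insert_self _ _) ?_ rfl hrec' ?_ ?_
        · intro hc
          rcases Finset.mem_insert.mp hc with hc | hc
          · exact hj2j (congrArg Prod.snd hc)
          · exact Finset.notMem_erase _ _ hc
        · intro e' he' hc
          apply hiA
          have : e'.1 = i := by rw [hc]
          rw [← this]
          exact List.mem_map_of_mem he'
        · intro e' he' hc
          have hTtl : (List.map Prod.snd (hd :: tl')).Nodup := hT.2
          rw [List.map_cons, List.nodup_cons] at hTtl
          apply hTtl.1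
          rw [← hc]
          exact List.mem_map_of_mem (show e' ∈ tl' from he')
      have hj₂un : ¬ taskMatched (insert (i,j) (μ.erase (i,hd.2))) hd.2 := by
        rw [hm₁' hd.2]
        rintro (⟨_, hc⟩ | hc)
        · exact hc rfl
        · exact hj2j hc
      obtain ⟨hBM', hw', hm'⟩ := ih htrans hA.2 hT.2 hBM₁ hj₂un
      rw [applyPath_cons hiA hμ hmat]
      refine ⟨hBM', ?_, ?_⟩
      · rw [hw', hw₁']; ring
      · intro l
        rw [hm' l, hm₁' l]
        constructor
        · rintro ((⟨hl, _⟩ | rfl) | rfl)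
          · exact Or.inl hl
          · exact Or.inr rfl
          · exact Or.inl ⟨(i, hd.2), hmat, rfl⟩
        · rintro (hl | hlj)
          · by_cases hlj₂ : l = hd.2
            · exact Or.inr hlj₂
            · exact Or.inl (Or.inl ⟨hl, hlj₂⟩)
          · exact Or.inl (Or.inr hlj)

end Aux4
section Aux5

variable {n m : ℕ} {b : Fin n → ℕ} {E' : Finset (Edge n m)} {q : Fin m → ℝ}

lemma exists_min_path {cost : List (Edge n m) → ℕ} {μ : Finset (Edge n m)} {j : Fin m}
    (h : ∃ p, IsAugPathFrom b E' μ j p) :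
    ∃ p, IsAugPathFrom b E' μ j p ∧ ∀ p', IsAugPathFrom b E' μ j p' → cost p ≤ cost p' := by
  classical
  obtain ⟨p₀, hp₀⟩ := h
  have hex : ∃ c, ∃ p, IsAugPathFrom b E' μ j p ∧ cost p = c := ⟨cost p₀, p₀, hp₀, rfl⟩
  obtain ⟨p, hp, hpc⟩ := Nat.find_spec hex
  refine ⟨p, hp, fun p' hp' => ?_⟩
  rw [hpc]
  exact Nat.find_min' hex ⟨p', hp', rfl⟩

lemma selectPath_none_iff {cost : List (Edge n m) → ℕ} {μ : Finset (Edge n m)} {j : Fin m} :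
    selectPath cost b E' μ j = none ↔ ¬ ∃ p, IsAugPathFrom b E' μ j p := by
  classical
  unfold selectPath
  by_cases h : ∃ p, IsAugPathFrom b E' μ j p ∧ ∀ p', IsAugPathFrom b E' μ j p' → cost p ≤ cost p'
  · rw [dif_pos h]
    simp only [reduceCtorEq, false_iff, not_not]
    exact ⟨h.choose, h.choose_spec.1⟩
  · rw [dif_neg h]
    simp only [true_iff]
    intro hcon
    exact h (exists_min_path hcon)

lemma selectPath_some {cost : List (Edge n m) → ℕ} {μ : Finset (Edge n m)} {j : Fin m}
    {p : List (Edge n m)} (h : selectPath cost b E' μ j = some p) :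
    IsAugPathFrom b E' μ j p := by
  classical
  unfold selectPath at h
  by_cases hex : ∃ p, IsAugPathFrom b E' μ j p ∧ ∀ p', IsAugPathFrom b E' μ j p' → cost p ≤ cost p'
  · rw [dif_pos hex] at h
    injection h with h'
    exact h' ▸ hex.choose_spec.1
  · rw [dif_neg hex] at h
    cases h

/-- Berge-type exchange lemma. -/
lemma key_exchange :
    ∀ (N : ℕ) (μ ν : Finset (Edge n m)), (ν \ μ).card ≤ N → ∀ (j : Fin m),
    IsBMatching b E' μ → IsBMatching b E' ν →
    ¬ taskMatched μ j → taskMatched ν j →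
    (¬ ∃ p, IsAugPathFrom b E' μ j p) →
    ∃ k, taskMatched μ k ∧ ¬ taskMatched ν k ∧
      ∃ ν', IsBMatching b E' ν' ∧ weight q ν' = weight q ν - q j + q k ∧
        (∀ l, taskMatched ν' l → taskMatched ν l ∨ l = k) ∧ ¬ taskMatched ν' j ∧
        (∀ e ∈ μ, e ∈ ν → e ∈ ν') := by
  intro N
  induction N with
  | zero =>
    intro μ ν hcard j hBMμ hBMν hjμ hjν _
    exfalso
    obtain ⟨e, he, he2⟩ := hjν
    have : e ∈ μ := by
      by_contra hc
      have : e ∈ ν \ μ := Finset.mem_sdiff.mpr ⟨he, hc⟩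
      have := Finset.card_pos.mpr ⟨e, this⟩
      omega
    exact hjμ ⟨e, this, he2⟩
  | succ N ih =>
    intro μ ν hcard j hBMμ hBMν hjμ hjν hno
    classical
    -- the ν-edge at j
    obtain ⟨e₁, he₁, he₁2⟩ := hjν
    set i₁ := e₁.1 with hi₁def
    have he₁' : e₁ = (i₁, j) := Prod.ext rfl he₁2
    have hgν : (i₁, j) ∈ ν := he₁' ▸ he₁
    have hgμ : (i₁, j) ∉ μ := fun hc => hjμ ⟨(i₁,j), hc, rfl⟩
    have hgE : (i₁, j) ∈ E' := hBMν.1 hgν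
    -- i₁ must be saturated in μ
    have hsat : b i₁ ≤ deg μ i₁ := by
      by_contra hc
      push_neg at hc
      exact hno ⟨[(i₁,j)], single_path hgE hgμ hc⟩
    -- find an edge of μ at i₁ not in ν
    have hexf : ∃ e ∈ μ, e.1 = i₁ ∧ e ∉ ν := by
      by_contra hc
      push_neg at hc
      have hsub : μ.filter (fun e => e.1 = i₁) ⊆ (ν.filter (fun e => e.1 = i₁)).erase (i₁,j) := by
        intro e he
        obtain ⟨heμ, he1⟩ := Finset.mem_filter.mp he
        refine Finset.mem_erase.mpr ⟨?_, Finset.mem_filter.mpr ⟨hc e heμ he1, he1⟩⟩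
        intro hcon
        exact hgμ (hcon ▸ heμ)
      have h1 : deg μ i₁ ≤ ((ν.filter (fun e => e.1 = i₁)).erase (i₁,j)).card :=
        Finset.card_le_card hsub
      have hmemf : (i₁,j) ∈ ν.filter (fun e : Edge n m => e.1 = i₁) :=
        Finset.mem_filter.mpr ⟨hgν, rfl⟩
      have h2 : ((ν.filter (fun e : Edge n m => e.1 = i₁)).erase (i₁,j)).card
          = deg ν i₁ - 1 := by
        rw [Finset.card_erase_of_mem hmemf]
        rfl
      have h3 : deg ν i₁ ≤ b i₁ := hBMν.2.1 i₁
      have h4 : 0 < deg ν i₁ := Finset.card_pos.mpr ⟨(i₁,j), hmemf⟩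
      omega
    obtain ⟨f₂, hf₂μ, hf₂1, hf₂ν⟩ := hexf
    set j₂ := f₂.2 with hj₂def
    have hf₂' : f₂ = (i₁, j₂) := Prod.ext hf₂1 rfl
    have hfμ : (i₁, j₂) ∈ μ := hf₂' ▸ hf₂μ
    have hfν : (i₁, j₂) ∉ ν := hf₂' ▸ hf₂ν
    have hj₂j : j₂ ≠ j := fun hc => hjμ ⟨(i₁,j₂), hfμ, hc⟩
    by_cases hj₂ν : taskMatched ν j₂
    · -- recursive case: swap μ and recurse from j₂
      have hsw := swap_lemma (f := (i₁,j₂)) (g := (i₁,j)) hBMμ hfμ hgE hjμ rfl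
      obtain ⟨hBMμ₂, hwμ₂, hmμ₂, hprμ₂⟩ := hsw
      set μ₂ := insert (i₁,j) (μ.erase (i₁,j₂)) with hμ₂def
      have hj₂μ₂ : ¬ taskMatched μ₂ j₂ := by
        rw [hmμ₂ j₂]
        rintro (⟨_, hc⟩ | hc)
        · exact hc rfl
        · exact hj₂j hc
      have hno₂ : ¬ ∃ p, IsAugPathFrom b E' μ₂ j₂ p :=
        prune hgE hjμ hfμ hsat hno
      have hcard₂ : (ν \ μ₂).card ≤ N := by
        have hnusd : ν \ μ₂ = (ν \ μ).erase (i₁,j) := by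
          ext e
          simp only [Finset.mem_sdiff, Finset.mem_erase, hμ₂def, Finset.mem_insert,
            Finset.mem_erase]
          constructor
          · rintro ⟨heν, hc⟩
            push_neg at hc
            refine ⟨hc.1, heν, ?_⟩
            intro heμ
            by_cases hef : e = (i₁,j₂)
            · exact hfν (hef ▸ heν)
            · exact hc.2 hef heμ
          · rintro ⟨hne, heν, heμ⟩
            refine ⟨heν, ?_⟩
            rintro (hc | ⟨_, hc⟩)
            · exact hne hc
            · exact heμ hc
        rw [hnusd, Finset.card_erase_of_mem (Finset.mem_sdiff.mpr ⟨hgν, hgμ⟩)]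
        omega
      obtain ⟨k, hkμ₂, hkν, ν', hBMν', hwν', hmν', hjν', hprν'⟩ :=
        ih μ₂ ν hcard₂ j₂ hBMμ₂ hBMν hj₂μ₂ hj₂ν hno₂
      -- translate k back to μ
      have hjνm : taskMatched ν j := ⟨(i₁,j), hgν, rfl⟩
      have hkj : k ≠ j := fun hc => hkν (hc ▸ hjνm)
      have hkj₂ : k ≠ j₂ := fun hc => hkν (hc ▸ hj₂ν)
      have hkμ : taskMatched μ k := by
        rw [hmμ₂ k] at hkμ₂
        rcases hkμ₂ with ⟨hk, _⟩ | hc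
        · exact hk
        · exact absurd hc hkj
      -- (i₁,j) is a common edge of μ₂ and ν, hence in ν'
      have hgν' : (i₁,j) ∈ ν' := hprν' (i₁,j) (Finset.mem_insert_self _ _) hgν
      -- j₂ is unmatched in ν'
      have hj₂ν' : ¬ taskMatched ν' j₂ := hjν'
      -- now swap ν' : remove (i₁,j), add (i₁,j₂)
      have hswν := swap_lemma (f := (i₁,j)) (g := (i₁,j₂)) hBMν' hgν' (hBMμ.1 hfμ) hj₂ν' rfl
      obtain ⟨hBMν'', hwν'', hmν'', hprν''⟩ := hswν
      refine ⟨k, hkμ, hkν, insert (i₁,j₂) (ν'.erase (i₁,j)), hBMν'', ?_, ?_, ?_, ?_⟩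
      · rw [hwν'' q, hwν']
        ring
      · intro l hl
        rw [hmν'' l] at hl
        rcases hl with ⟨hl, _⟩ | hc
        · rcases hmν' l hl with hl' | hl'
          · exact Or.inl hl'
          · exact Or.inr hl'
        · exact Or.inl (hc ▸ hj₂ν)
      · rw [hmν'' j]
        rintro (⟨_, hc⟩ | hc)
        · exact hc rfl
        · exact hj₂j hc.symm
      · intro e heμ heν
        have hef : e ≠ (i₁,j) := fun hc => hgμ (hc ▸ heμ)
        have heμ₂ : e ∈ μ₂ := by
          apply hprμ₂ e heμ
          intro hc
          exact hfν (hc ▸ heν)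
        exact hprν'' e (hprν' e heμ₂ heν) hef
    · -- base case: j₂ is unmatched in ν
      have hswν := swap_lemma (f := (i₁,j)) (g := (i₁,j₂)) hBMν hgν (hBMμ.1 hfμ) hj₂ν rfl
      obtain ⟨hBMν', hwν', hmν', hprν'⟩ := hswν
      refine ⟨j₂, ⟨(i₁,j₂), hfμ, rfl⟩, hj₂ν, insert (i₁,j₂) (ν.erase (i₁,j)), hBMν', ?_, ?_, ?_, ?_⟩
      · rw [hwν' q]
      · intro l hl
        rw [hmν' l] at hl
        rcases hl with ⟨hl, _⟩ | hc
        · exact Or.inl hl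
        · exact Or.inr hc
      · rw [hmν' j]
        rintro (⟨_, hc⟩ | hc)
        · exact hc rfl
        · exact hj₂j hc.symm
      · intro e heμ heν
        exact hprν' e heν (fun hc => hgμ (hc ▸ heμ))

end Aux5
section Aux6

variable {n m : ℕ} {b : Fin n → ℕ} {E' : Finset (Edge n m)} {q : Fin m → ℝ}

/-- One step of the augmenting-path algorithm. -/
noncomputable def augStep (cost : List (Edge n m) → ℕ) (b : Fin n → ℕ)
    (E' : Finset (Edge n m)) (μ : Finset (Edge n m)) (j : Fin m) : Finset (Edge n m) :=
  match selectPath cost b E' μ j with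
  | some p => applyPath μ p
  | none => μ

lemma runAug_eq_foldl (cost : List (Edge n m) → ℕ) (b : Fin n → ℕ) (q : Fin m → ℝ)
    (E' : Finset (Edge n m)) :
    runAug cost b q E' = (sortedTasks m q).foldl (augStep cost b E') ∅ := rfl

lemma augStep_spec {cost : List (Edge n m) → ℕ} {μ : Finset (Edge n m)} {t : Fin m}
    (hBM : IsBMatching b E' μ) (ht : ¬ taskMatched μ t) :
    IsBMatching b E' (augStep cost b E' μ t) ∧
    (∀ l, taskMatched μ l → taskMatched (augStep cost b E' μ t) l) ∧
    (∀ l, taskMatched (augStep cost b E' μ t) l → taskMatched μ l ∨ l = t) := by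
  unfold augStep
  cases hsel : selectPath cost b E' μ t with
  | none => exact ⟨hBM, fun l h => h, fun l h => Or.inl h⟩
  | some p =>
    have hp := selectPath_some hsel
    obtain ⟨h1, _, h3⟩ := apply_path_spec (q := fun _ => (0:ℝ)) (augpath_to_augP hp)
      hp.agentsNodup hp.tasksNodup hBM ht
    exact ⟨h1, fun l h => (h3 l).mpr (Or.inl h), fun l h => (h3 l).mp h⟩

lemma augStep_matched {cost : List (Edge n m) → ℕ} {μ : Finset (Edge n m)} {t : Fin m}
    {p : List (Edge n m)} (hBM : IsBMatching b E' μ) (ht : ¬ taskMatched μ t)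
    (hsel : selectPath cost b E' μ t = some p) :
    taskMatched (augStep cost b E' μ t) t := by
  unfold augStep
  rw [hsel]
  have hp := selectPath_some hsel
  obtain ⟨_, _, h3⟩ := apply_path_spec (q := fun _ => (0:ℝ)) (augpath_to_augP hp)
    hp.agentsNodup hp.tasksNodup hBM ht
  exact (h3 t).mpr (Or.inr rfl)

/-- Matched tasks persist along the fold. -/
lemma steps_spec {cost : List (Edge n m) → ℕ} :
    ∀ (L : List (Fin m)) (μ : Finset (Edge n m)), IsBMatching b E' μ →
      (∀ t ∈ L, ¬ taskMatched μ t) → L.Nodup →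
      IsBMatching b E' (L.foldl (augStep cost b E') μ) ∧
      (∀ l, taskMatched μ l → taskMatched (L.foldl (augStep cost b E') μ) l) ∧
      (∀ l, taskMatched (L.foldl (augStep cost b E') μ) l → taskMatched μ l ∨ l ∈ L) := by
  intro L
  induction L with
  | nil => intro μ h _ _; exact ⟨h, fun l h => h, fun l h => Or.inl h⟩
  | cons t L ih =>
    intro μ hBM hun hnd
    have ht : ¬ taskMatched μ t := hun t (by simp)
    obtain ⟨hBM', hmono, hback⟩ := augStep_spec (cost := cost) hBM ht
    rw [List.nodup_cons] at hnd
    have hun' : ∀ t' ∈ L, ¬ taskMatched (augStep cost b E' μ t) t' := by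
      intro t' ht' hc
      rcases hback t' hc with hc' | hc'
      · exact hun t' (List.mem_cons_of_mem _ ht') hc'
      · exact hnd.1 (hc' ▸ ht')
    obtain ⟨h1, h2, h3⟩ := ih (augStep cost b E' μ t) hBM' hun' hnd.2
    refine ⟨h1, fun l hl => h2 l (hmono l hl), fun l hl => ?_⟩
    rcases h3 l hl with hl' | hl'
    · rcases hback l hl' with h | h
      · exact Or.inl h
      · exact Or.inr (by simp [h])
    · exact Or.inr (List.mem_cons_of_mem _ hl')

/-- The master greedy invariant. -/
lemma master {cost : List (Edge n m) → ℕ} (hq : ∀ j', 0 < q j') :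
    ∀ (L : List (Fin m)) (μ : Finset (Edge n m)) (P : Finset (Fin m)),
      IsBMatching b E' μ →
      (∀ l, taskMatched μ l → l ∈ P) →
      (∀ t ∈ L, t ∉ P) → L.Nodup →
      L.Pairwise (fun a c => q c ≤ q a) →
      (∀ t ∈ L, ∀ k ∈ P, q t ≤ q k) →
      (∀ ν, IsBMatching b E' ν → (∀ l, taskMatched ν l → l ∈ P) → weight q ν ≤ weight q μ) →
      (∀ ν, IsBMatching b E' ν → (∀ l, taskMatched ν l → l ∈ P ∪ L.toFinset) →
        weight q ν ≤ weight q (L.foldl (augStep cost b E') μ)) := by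
  intro L
  induction L with
  | nil =>
    intro μ P hBM hμP _ _ _ _ hopt ν hν hνP
    simp only [List.foldl_nil]
    exact hopt ν hν (fun l hl => by simpa using hνP l hl)
  | cons t L ih =>
    intro μ P hBM hμP hLP hnd hpair hqP hopt
    rw [List.nodup_cons] at hnd
    rw [List.pairwise_cons] at hpair
    have htP : t ∉ P := hLP t (by simp)
    have htun : ¬ taskMatched μ t := fun hc => htP (hμP t hc)
    have hstep := augStep_spec (cost := cost) hBM htun
    obtain ⟨hBM', hmono, hback⟩ := hstep
    -- optimality of the new matching over insert t P
    have hopt' : ∀ ν, IsBMatching b E' ν → (∀ l, taskMatched ν l → l ∈ insert t P) →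
        weight q ν ≤ weight q (augStep cost b E' μ t) := by
      intro ν hν hνP
      unfold augStep
      cases hsel : selectPath cost b E' μ t with
      | some p =>
        have hp := selectPath_some hsel
        obtain ⟨_, hw, _⟩ := apply_path_spec (q := q) (augpath_to_augP hp) hp.agentsNodup
          hp.tasksNodup hBM htun
        rw [hw]
        by_cases hνt : taskMatched ν t
        · obtain ⟨et, hetν, het2⟩ := hνt
          have hBMν' : IsBMatching b E' (ν.erase et) := bm_subset hν (Finset.erase_subset _ _)
          have hν'P : ∀ l, taskMatched (ν.erase et) l → l ∈ P := by
            intro l hl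
            obtain ⟨e, he, he2⟩ := hl
            have heν : e ∈ ν := Finset.mem_of_mem_erase he
            rcases Finset.mem_insert.mp (hνP l ⟨e, heν, he2⟩) with hc | hc
            · exfalso
              have : e = et := bm_task_unique hν heν hetν (by rw [he2, hc, ← het2])
              exact (Finset.mem_erase.mp he).1 this
            · exact hc
          have hwν : weight q ν = weight q (ν.erase et) + q t := by
            rw [weight_erase hetν, het2]; ring
          rw [hwν]
          have := hopt _ hBMν' hν'P
          linarith
        · have hνP' : ∀ l, taskMatched ν l → l ∈ P := by
            intro l hl
            rcases Finset.mem_insert.mp (hνP l hl) with hc | hc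
            · exact absurd (hc ▸ hl) hνt
            · exact hc
          have := hopt ν hν hνP'
          have := hq t
          linarith
      | none =>
        have hnopath : ¬ ∃ p, IsAugPathFrom b E' μ t p := selectPath_none_iff.mp hsel
        by_cases hνt : taskMatched ν t
        · obtain ⟨k, hkμ, hkν, ν', hBMν', hwν', hmν', htν', _⟩ :=
            key_exchange (q := q) (ν \ μ).card μ ν le_rfl t hBM hν htun hνt hnopath
          have hν'P : ∀ l, taskMatched ν' l → l ∈ P := by
            intro l hl
            rcases hmν' l hl with hl' | hl'
            · rcases Finset.mem_insert.mp (hνP l hl') with hc | hc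
              · exact absurd (hc ▸ hl) htν'
              · exact hc
            · rw [hl']
              exact hμP k hkμ
          have h1 : weight q ν' ≤ weight q μ := hopt ν' hBMν' hν'P
          have h2 : q t ≤ q k := hqP t (by simp) k (hμP k hkμ)
          linarith [hwν' ▸ h1]
        · have hνP' : ∀ l, taskMatched ν l → l ∈ P := by
            intro l hl
            rcases Finset.mem_insert.mp (hνP l hl) with hc | hc
            · exact absurd (hc ▸ hl) hνt
            · exact hc
          exact hopt ν hν hνP'
    have hrec := ih (augStep cost b E' μ t) (insert t P) hBM'
      (fun l hl => by
        rcases hback l hl with h | h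
        · exact Finset.mem_insert_of_mem (hμP l h)
        · exact Finset.mem_insert.mpr (Or.inl h))
      (fun t' ht' => by
        intro hc
        rcases Finset.mem_insert.mp hc with hc | hc
        · exact hnd.1 (hc ▸ ht')
        · exact hLP t' (List.mem_cons_of_mem _ ht') hc)
      hnd.2 hpair.2
      (fun t' ht' k hk => by
        rcases Finset.mem_insert.mp hk with rfl | hk
        · exact hpair.1 t' ht'
        · exact hqP t' (List.mem_cons_of_mem _ ht') k hk)
      hopt'
    intro ν hν hνP
    rw [List.foldl_cons]
    apply hrec ν hν
    intro l hl
    have := hνP l hl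
    simp only [List.toFinset_cons, Finset.mem_union, Finset.mem_insert] at this ⊢
    tauto

lemma sortedTasks_perm (q : Fin m → ℝ) : (sortedTasks m q).Perm (List.finRange m) :=
  List.perm_insertionSort _ _

lemma sortedTasks_nodup (q : Fin m → ℝ) : (sortedTasks m q).Nodup :=
  ((sortedTasks_perm q).nodup_iff).mpr (List.nodup_finRange m)

lemma sortedTasks_mem (q : Fin m → ℝ) (j : Fin m) : j ∈ sortedTasks m q :=
  ((sortedTasks_perm q).mem_iff).mpr (List.mem_finRange j)

lemma sortedTasks_sorted (q : Fin m → ℝ) :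
    (sortedTasks m q).Pairwise (fun a c => q c ≤ q a) := by
  letI : IsTotal (Fin m) (fun a c => q c ≤ q a) := ⟨fun a c => le_total (q c) (q a)⟩
  letI : IsTrans (Fin m) (fun a c => q c ≤ q a) := ⟨fun a c d h1 h2 => le_trans h2 h1⟩
  exact List.pairwise_insertionSort _ _

/-- `runAug` computes a maximum vertex-weighted b-matching. -/
lemma runAug_max (cost : List (Edge n m) → ℕ) (hq : ∀ j', 0 < q j') :
    IsMaxMatching b q E' (runAug cost b q E') := by
  rw [runAug_eq_foldl]
  have hsteps := steps_spec (b := b) (E' := E') (cost := cost) (sortedTasks m q) ∅ bm_empty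
    (fun t _ => by simp [taskMatched]) (sortedTasks_nodup q)
  refine ⟨hsteps.1, ?_⟩
  intro ν hν
  refine master hq (sortedTasks m q) ∅ ∅ bm_empty
    (fun l hl => by simp [taskMatched] at hl)
    (fun t _ => Finset.notMem_empty t) (sortedTasks_nodup q) (sortedTasks_sorted q)
    (fun t _ k hk => absurd hk (Finset.notMem_empty k))
    (fun ν' hν' hν'P => ?_) ν hν (fun l _ => by simp [sortedTasks_mem q l])
  -- optimality over the empty set : ν' matches nothing, so its weight is 0... 
  have : ν' = ∅ ∨ True := Or.inr trivial
  -- every b-matching matching no tasks is empty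
  have hempty : ν' = ∅ := by
    by_contra hc
    obtain ⟨e, he⟩ := Finset.nonempty_of_ne_empty hc
    exact absurd (hν'P e.2 ⟨e, he, rfl⟩) (Finset.notMem_empty _)
  rw [hempty]

end Aux6
section Aux7

variable {n m : ℕ} {b : Fin n → ℕ} {q : Fin m → ℝ}

lemma augP_edges_mem {E₁ μ : Finset (Edge n m)} :
    ∀ {p t}, AugP b E₁ μ t p → ∀ e ∈ p, e ∈ E₁ := by
  intro p t h
  induction h with
  | single i j hE _ _ =>
    intro e he; simp only [List.mem_singleton] at he; exact he ▸ hE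
  | cons i j j₂ p hE _ _ _ _ ih =>
    intro e he
    rcases List.mem_cons.mp he with rfl | he
    · exact hE
    · exact ih e he

lemma augP_tasks {E₁ μ : Finset (Edge n m)} :
    ∀ {p t}, AugP b E₁ μ t p → ∀ e ∈ p, e.2 = t ∨ taskMatched μ e.2 := by
  intro p t h
  induction h with
  | single i j _ _ _ =>
    intro e he; simp only [List.mem_singleton] at he; exact Or.inl (by rw [he])
  | cons i j j₂ p _ _ _ hmat hrec ih =>
    intro e he
    rcases List.mem_cons.mp he with rfl | he
    · exact Or.inl rfl
    · rcases ih e he with h | h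
      · exact Or.inr (h ▸ ⟨(i,j₂), hmat, rfl⟩)
      · exact Or.inr h

lemma augP_mono_E {E₁ E₂ μ : Finset (Edge n m)} :
    ∀ {p t}, AugP b E₁ μ t p → (∀ e ∈ p, e ∈ E₂) → AugP b E₂ μ t p := by
  intro p t h
  induction h with
  | single i j hE hμ hdeg =>
    intro hmem
    exact AugP.single i j (hmem _ (by simp)) hμ hdeg
  | cons i j j₂ p hE hμ hsat hmat hrec ih =>
    intro hmem
    exact AugP.cons i j j₂ p (hmem _ (by simp)) hμ hsat hmat
      (ih (fun e he => hmem e (List.mem_cons_of_mem _ he)))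

lemma augpath_mono_sub {E₁ E₂ μ : Finset (Edge n m)} {t : Fin m} {p : List (Edge n m)}
    (hsub : E₁ ⊆ E₂) (h : IsAugPathFrom b E₁ μ t p) : IsAugPathFrom b E₂ μ t p := by
  have hA := augpath_to_augP h
  exact augP_to_augpath (augP_mono_E hA (fun e he => hsub (augP_edges_mem hA e he)))
    h.agentsNodup h.tasksNodup

lemma augpath_E_iff {E E'' μ : Finset (Edge n m)} {t j : Fin m}
    (hsub : E'' ⊆ E) (hcov : ∀ e ∈ E, e.2 ≠ j → e ∈ E'')
    (hjun : ¬ taskMatched μ j) (htj : t ≠ j) :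
    IsAugPathFrom b E'' μ t = IsAugPathFrom b E μ t := by
  funext p
  apply propext
  constructor
  · exact augpath_mono_sub hsub
  · intro h
    have hA := augpath_to_augP h
    refine augP_to_augpath (augP_mono_E hA ?_) h.agentsNodup h.tasksNodup
    intro e he
    apply hcov e (augP_edges_mem hA e he)
    rcases augP_tasks hA e he with h' | h'
    · rw [h']; exact htj
    · intro hc; exact hjun (hc ▸ h')

lemma selectPath_E_eq {cost : List (Edge n m) → ℕ} {E E'' μ : Finset (Edge n m)} {t j : Fin m}
    (hsub : E'' ⊆ E) (hcov : ∀ e ∈ E, e.2 ≠ j → e ∈ E'')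
    (hjun : ¬ taskMatched μ j) (htj : t ≠ j) :
    selectPath cost b E'' μ t = selectPath cost b E μ t := by
  unfold selectPath
  rw [augpath_E_iff hsub hcov hjun htj]

lemma foldeq {cost : List (Edge n m) → ℕ} {E E'' : Finset (Edge n m)} {j : Fin m}
    (hsub : E'' ⊆ E) (hcov : ∀ e ∈ E, e.2 ≠ j → e ∈ E'') :
    ∀ (L : List (Fin m)) (μ : Finset (Edge n m)),
      IsBMatching b E μ → (∀ t ∈ L, ¬ taskMatched μ t) → L.Nodup →
      ¬ taskMatched (L.foldl (augStep cost b E) μ) j → ¬ taskMatched μ j →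
      L.foldl (augStep cost b E'') μ = L.foldl (augStep cost b E) μ := by
  intro L
  induction L with
  | nil => intro μ _ _ _ _ _; rfl
  | cons t L ih =>
    intro μ hBM hun hnd hfin hjμ
    rw [List.nodup_cons] at hnd
    have htun : ¬ taskMatched μ t := hun t (by simp)
    rw [List.foldl_cons] at hfin ⊢
    rw [List.foldl_cons]
    by_cases htj : t = j
    · subst htj
      -- selectPath must be none in E, hence in E''
      have hnone : selectPath cost b E μ t = none := by
        cases hsel : selectPath cost b E μ t with
        | none => rfl
        | some p =>
          exfalso
          have hmt : taskMatched (augStep cost b E μ t) t :=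
            augStep_matched hBM htun hsel
          obtain ⟨hBM', hback1, hback2⟩ := augStep_spec (cost := cost) hBM htun
          have hun' : ∀ t' ∈ L, ¬ taskMatched (augStep cost b E μ t) t' := by
            intro t' ht' hc
            rcases hback2 t' hc with hc' | hc'
            · exact hun t' (List.mem_cons_of_mem _ ht') hc'
            · exact hnd.1 (hc' ▸ ht')
          exact hfin ((steps_spec L _ hBM' hun' hnd.2).2.1 t hmt)
      have hnone'' : selectPath cost b E'' μ t = none := by
        rw [selectPath_none_iff]
        rintro ⟨p, hp⟩
        exact (selectPath_none_iff.mp hnone) ⟨p, augpath_mono_sub hsub hp⟩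
      have hstepE : augStep cost b E μ t = μ := by unfold augStep; rw [hnone]
      have hstepE'' : augStep cost b E'' μ t = μ := by unfold augStep; rw [hnone'']
      rw [hstepE] at hfin
      rw [hstepE, hstepE'']
      exact ih μ hBM (fun t' ht' => hun t' (List.mem_cons_of_mem _ ht')) hnd.2 hfin hjμ
    · have hstep_eq : augStep cost b E'' μ t = augStep cost b E μ t := by
        unfold augStep
        rw [selectPath_E_eq hsub hcov hjμ htj]
      obtain ⟨hBM', hback1, hback2⟩ := augStep_spec (cost := cost) hBM htun
      have hun' : ∀ t' ∈ L, ¬ taskMatched (augStep cost b E μ t) t' := by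
        intro t' ht' hc
        rcases hback2 t' hc with hc' | hc'
        · exact hun t' (List.mem_cons_of_mem _ ht') hc'
        · exact hnd.1 (hc' ▸ ht')
      have hjμ' : ¬ taskMatched (augStep cost b E μ t) j := by
        intro hc
        rcases hback2 j hc with hc' | hc'
        · exact hjμ hc'
        · exact htj hc'.symm
      rw [hstep_eq]
      exact ih (augStep cost b E μ t) hBM' hun' hnd.2 hfin hjμ'

lemma runAug_E_eq {cost : List (Edge n m) → ℕ} {E E'' : Finset (Edge n m)} {j : Fin m}
    (hsub : E'' ⊆ E) (hcov : ∀ e ∈ E, e.2 ≠ j → e ∈ E'')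
    (hun : ¬ taskMatched (runAug cost b q E) j) :
    runAug cost b q E'' = runAug cost b q E := by
  rw [runAug_eq_foldl, runAug_eq_foldl]
  rw [runAug_eq_foldl] at hun
  exact foldeq hsub hcov (sortedTasks m q) ∅ bm_empty
    (fun t _ => by simp [taskMatched]) (sortedTasks_nodup q) hun (by simp [taskMatched])

end Aux7
section Final

lemma main_unmatched {n m : ℕ} (cost : List (Edge n m) → ℕ) (b : Fin n → ℕ) (q : Fin m → ℝ)
    (hq : ∀ j', 0 < q j') (E : Finset (Edge n m)) (j : Fin m)
    (v : ℝ) (hv : 0 < v) (hvq : v ≤ q j)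
    (E'' : Finset (Edge n m)) (hsub : E'' ⊆ E) (hcov : ∀ e ∈ E, e.2 ≠ j → e ∈ E'')
    (hun : ¬ taskMatched (runAug cost b q E) j) :
    ¬ taskMatched (runAug cost b (Function.update q j v) E'') j := by
  classical
  rcases eq_or_lt_of_le hvq with heq | hlt
  · rw [heq, Function.update_eq_self]
    rw [runAug_E_eq hsub hcov hun]
    exact hun
  · set q' := Function.update q j v with hq'def
    have hq' : ∀ j', 0 < q' j' := by
      intro j'
      by_cases h : j' = j
      · rw [h, hq'def, Function.update_self]; exact hv
      · rw [hq'def, Function.update_of_ne h]; exact hq j'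
    have hmax1 := runAug_max (E' := E) (q := q) (b := b) cost hq
    have hmax2 := runAug_max (E' := E'') (q := q') (b := b) cost hq'
    intro hmat
    set μ := runAug cost b q E with hμdef
    set μ'' := runAug cost b q' E'' with hμ''def
    obtain ⟨e₀, he₀, he₀2⟩ := hmat
    have hBMμ''E : IsBMatching b E μ'' := ⟨hmax2.1.1.trans hsub, hmax2.1.2.1, hmax2.1.2.2⟩
    have w1 : weight q μ'' ≤ weight q μ := hmax1.2 μ'' hBMμ''E
    have hμE'' : IsBMatching b E'' μ := by
      refine ⟨?_, hmax1.1.2.1, hmax1.1.2.2⟩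
      intro e he
      refine hcov e (hmax1.1.1 he) ?_
      intro hc
      exact hun ⟨e, he, hc⟩
    have w2 : weight q' μ ≤ weight q' μ'' := hmax2.2 μ hμE''
    have w3 : weight q' μ = weight q μ := by
      unfold weight
      apply Finset.sum_congr rfl
      intro e he
      have hne : e.2 ≠ j := fun hc => hun ⟨e, he, hc⟩
      rw [hq'def, Function.update_of_ne hne]
    have w4 : weight q μ'' = weight q' μ'' + (q j - v) := by
      have hfil : μ''.filter (fun e => e.2 = j) = {e₀} := by
        apply Finset.eq_singleton_iff_unique_mem.mpr
        refine ⟨Finset.mem_filter.mpr ⟨he₀, he₀2⟩, ?_⟩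
        intro x hx
        obtain ⟨hx1, hx2⟩ := Finset.mem_filter.mp hx
        exact bm_task_unique hmax2.1 hx1 he₀ (by rw [hx2, he₀2])
      unfold weight
      rw [← Finset.sum_filter_add_sum_filter_not μ'' (fun e => e.2 = j) (fun e => q e.2),
        ← Finset.sum_filter_add_sum_filter_not μ'' (fun e => e.2 = j) (fun e => q' e.2),
        hfil]
      have h5 : ∑ e ∈ μ''.filter (fun e => ¬ e.2 = j), q e.2
          = ∑ e ∈ μ''.filter (fun e => ¬ e.2 = j), q' e.2 := by
        apply Finset.sum_congr rfl
        intro e he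
        rw [hq'def, Function.update_of_ne (Finset.mem_filter.mp he).2]
      rw [h5, Finset.sum_singleton, Finset.sum_singleton, he₀2, hq'def,
        Function.update_self]
      ring
    linarith

end Final
/-- When tasks may additionally underreport their values, `M_BFS` and
`M_DFS` remain truthful: if task `j` is unmatched when it reports its true value `q j`, it
is also unmatched when it reports any value `v` with `0 < v ≤ q j` (edges fixed); and,
combining with edge-hiding, a task unmatched under truthful reporting stays unmatched under
any joint (nonempty edge subset, lower value) report — so truthful reporting is a dominant
strategy for tasks bounded by their statements. -/
theorem task_value_manipulation_truthful (n m : ℕ) (b : Fin n → ℕ) (q : Fin m → ℝ)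
    (hq : ∀ j', 0 < q j') (E : Finset (Edge n m)) (j : Fin m)
    (v : ℝ) (hv : 0 < v) (hvq : v ≤ q j) :
    (¬ taskMatched (MBFS b q E) j → ¬ taskMatched (MBFS b (Function.update q j v) E) j) ∧
    (¬ taskMatched (MDFS b q E) j → ¬ taskMatched (MDFS b (Function.update q j v) E) j) ∧
    (∀ S, S ⊆ taskEdges E j → S.Nonempty →
      (¬ taskMatched (MBFS b q E) j →
        ¬ taskMatched (MBFS b (Function.update q j v) (tdeviate E j S)) j) ∧
      (¬ taskMatched (MDFS b q E) j →
        ¬ taskMatched (MDFS b (Function.update q j v) (tdeviate E j S)) j)) := by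
    classical
  have hcovE : ∀ e ∈ E, e.2 ≠ j → e ∈ E := fun e he _ => he
  refine ⟨?_, ?_, ?_⟩
  · exact fun h => main_unmatched (bfsCost n m) b q hq E j v hv hvq E subset_rfl hcovE h
  · exact fun h => main_unmatched (dfsCost n m) b q hq E j v hv hvq E subset_rfl hcovE h
  · intro S hS _
    have hsub : tdeviate E j S ⊆ E := by
      intro e he
      rcases Finset.mem_union.mp he with he | he
      · exact Finset.mem_of_mem_filter _ he
      · exact Finset.mem_of_mem_filter _ (hS he)
    have hcov : ∀ e ∈ E, e.2 ≠ j → e ∈ tdeviate E j S := by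
      intro e he hne
      exact Finset.mem_union_left _ (Finset.mem_filter.mpr ⟨he, hne⟩)
    exact ⟨fun h => main_unmatched (bfsCost n m) b q hq E j v hv hvq _ hsub hcov h,
      fun h => main_unmatched (dfsCost n m) b q hq E j v hv hvq _ hsub hcov h⟩
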